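/- (Existence of a complete prefix-closed basis.) Let Σ be a finite alphabet and f : List Σ → ℝ a function with finite Hankel rank r. Then there exist finite sets of strings 𝒫 and 𝒮, with 𝒫 prefix-closed (every prefix of an element of 𝒫 is in 𝒫) and with the empty string λ belonging to both 𝒫 and 𝒮, such that the finite sub-block H_B ∈ ℝ^{𝒫×𝒮} with entries H_B(u,v) = f(u ++ v) has rank exactly r. -/

import Mathlib

open Matrix

/-- A finite-dimensional subspace of functions is separated by finitely many coordinates. -/
private lemma exists_separating_finset_aux {A : Type*} :
    ∀ (n : ℕ) (W : Submodule ℝ (List A → ℝ)), FiniteDimensional ℝ W →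
      Module.finrank ℝ W ≤ n →
      ∃ S : Finset (List A), ∀ x ∈ W, (∀ v ∈ S, x v = 0) → x = 0 := by
  intro n
  classical
  induction n with
  | zero =>
    intro W hW hle
    have : W = ⊥ := by
      have := Submodule.finrank_eq_zero (R := ℝ) (S := W)
      exact this.mp (Nat.le_zero.mp hle)
    exact ⟨∅, fun x hx _ => by simpa [this] using hx⟩
  | succ m ih =>
    intro W hW hle
    by_cases hbot : W = ⊥
    · exact ⟨∅, fun x hx _ => by simpa [hbot] using hx⟩
    · obtain ⟨x, hxW, hx0⟩ := Submodule.exists_mem_ne_zero_of_ne_bot hbot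
      have : ∃ v : List A, x v ≠ 0 := by
        by_contra h
        push_neg at h
        exact hx0 (funext h)
      obtain ⟨v, hv⟩ := this
      set W' : Submodule ℝ (List A → ℝ) :=
        W ⊓ LinearMap.ker (LinearMap.proj (R := ℝ) (φ := fun _ : List A => ℝ) v) with hW'
      have hW'le : W' ≤ W := inf_le_left
      have hW'fin : FiniteDimensional ℝ W' := Submodule.finiteDimensional_of_le hW'le
      have hxnot : x ∉ W' := by
        intro hx
        exact hv ((Submodule.mem_inf.mp hx).2)
      have hlt : W' < W := lt_of_le_of_ne hW'le (fun h => hxnot (h ▸ hxW))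
      have hfr : Module.finrank ℝ W' < Module.finrank ℝ W :=
        Submodule.finrank_lt_finrank_of_lt hlt
      obtain ⟨S', hS'⟩ := ih W' hW'fin (by omega)
      refine ⟨insert v S', fun y hyW hy => ?_⟩
      have hyv : y v = 0 := hy v (Finset.mem_insert_self _ _)
      have hyW' : y ∈ W' := Submodule.mem_inf.mpr ⟨hyW, hyv⟩
      exact hS' y hyW' (fun w hw => hy w (Finset.mem_insert_of_mem hw))

/-- existence of a complete prefix-closed basis: if `f : List A → ℝ` has finite
Hankel rank `r`, then there are finite sets of strings `P` (prefix-closed, containing the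
empty string) and `S` (containing the empty string) such that the sub-block
`H_B (u, v) = f (u ++ v)` over `P × S` has rank exactly `r`. -/
theorem exists_complete_prefix_closed_basis {A : Type*} [Fintype A]
    (f : List A → ℝ) (r : ℕ)
    (hr : Module.rank ℝ
        ↥(Submodule.span ℝ
            {g : List A → ℝ | ∃ u : List A, g = fun v : List A => f (u ++ v)}) = r) :
    ∃ P S : Finset (List A),
      (∀ w ∈ P, ∀ u : List A, u <+: w → u ∈ P) ∧
      ([] : List A) ∈ P ∧ ([] : List A) ∈ S ∧
      (Matrix.of fun (u : ↥P) (v : ↥S) => f (↑u ++ ↑v)).rank = r := by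
  classical
  set rowf : List A → (List A → ℝ) := fun u v => f (u ++ v) with hrowf
  set R : Set (List A → ℝ) := {g : List A → ℝ | ∃ u : List A, g = fun v : List A => f (u ++ v)}
    with hRdef
  set V : Submodule ℝ (List A → ℝ) := Submodule.span ℝ R with hVdef
  have hfin : FiniteDimensional ℝ V := Module.finite_of_rank_eq_nat hr
  have hfr : Module.finrank ℝ V = r := Module.finrank_eq_of_rank_eq hr
  -- a finite generating set of V
  obtain ⟨G, hGfin, hGspan⟩ := Submodule.fg_def.mp (Module.Finite.iff_fg.mp hfin)
  have hGsub : G ⊆ (V : Set (List A → ℝ)) := hGspan ▸ Submodule.subset_span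
  have hTex : ∀ x ∈ G, ∃ T : Finset (List A → ℝ), ↑T ⊆ R ∧ x ∈ Submodule.span ℝ (T : Set _) :=
    fun x hx => Submodule.mem_span_finite_of_mem_span (hGsub hx)
  choose! T hT1 hT2 using hTex
  set GF : Finset (List A → ℝ) := hGfin.toFinset with hGF
  set TT : Finset (List A → ℝ) := GF.biUnion T with hTT
  have hTTsubR : (TT : Set (List A → ℝ)) ⊆ R := by
    intro g hg
    simp only [hTT, Finset.coe_biUnion, Set.mem_iUnion] at hg
    obtain ⟨x, hx, hgx⟩ := hg
    exact hT1 x (by simpa [hGF] using hx) hgx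
  have hVleTT : V ≤ Submodule.span ℝ (TT : Set (List A → ℝ)) := by
    rw [← hGspan]
    apply Submodule.span_le.mpr
    intro x hx
    have hxG : x ∈ GF := by simpa [hGF] using hx
    have : (T x : Set (List A → ℝ)) ⊆ (TT : Set _) := by
      intro g hg
      simp only [hTT, Finset.coe_biUnion, Set.mem_iUnion]
      exact ⟨x, by simpa [hGF] using hx, hg⟩
    exact Submodule.span_mono this (hT2 x hx)
  -- choose string representatives for elements of TT
  have huex : ∀ g ∈ TT, ∃ u : List A, g = fun v : List A => f (u ++ v) := fun g hg => hTTsubR hg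
  choose! uof huof using huex
  set U : Finset (List A) := TT.image uof with hU
  set P : Finset (List A) := insert [] (U.biUnion fun w => w.inits.toFinset) with hP
  have hUP : ∀ w ∈ U, w ∈ P := by
    intro w hw
    refine Finset.mem_insert_of_mem (Finset.mem_biUnion.mpr ⟨w, hw, ?_⟩)
    exact List.mem_toFinset.mpr ((List.mem_inits _ _).mpr (List.prefix_refl w))
  have hPclosed : ∀ w ∈ P, ∀ u : List A, u <+: w → u ∈ P := by
    intro w hw u hu
    rcases Finset.mem_insert.mp hw with h | h
    · subst h
      have : u = [] := List.prefix_nil.mp hu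
      simp [this, hP]
    · obtain ⟨x, hxU, hwx⟩ := Finset.mem_biUnion.mp h
      have hwx' : w <+: x := (List.mem_inits _ _).mp (List.mem_toFinset.mp hwx)
      refine Finset.mem_insert_of_mem (Finset.mem_biUnion.mpr ⟨x, hxU, ?_⟩)
      exact List.mem_toFinset.mpr ((List.mem_inits _ _).mpr (hu.trans hwx'))
  have hPempty : ([] : List A) ∈ P := Finset.mem_insert_self _ _
  -- the span of the rows indexed by P is all of V
  set V' : Submodule ℝ (List A → ℝ) := Submodule.span ℝ (rowf '' ↑P) with hV'
  have hV'eq : V' = V := by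
    apply le_antisymm
    · apply Submodule.span_le.mpr
      rintro g ⟨u, _, rfl⟩
      exact Submodule.subset_span ⟨u, rfl⟩
    · refine le_trans hVleTT (Submodule.span_le.mpr ?_)
      intro g hg
      have hgTT : g ∈ TT := hg
      have : g = rowf (uof g) := huof g hgTT
      rw [this]
      exact Submodule.subset_span ⟨uof g, hUP _ (Finset.mem_image_of_mem _ hgTT), rfl⟩
  have hV'fin : FiniteDimensional ℝ V' := hV'eq ▸ hfin
  have hV'fr : Module.finrank ℝ V' = r := by rw [hV'eq]; exact hfr
  -- a separating finite set of columns
  obtain ⟨S0, hS0⟩ := exists_separating_finset_aux (Module.finrank ℝ V') V' hV'fin le_rfl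
  set S : Finset (List A) := insert [] S0 with hS
  have hSempty : ([] : List A) ∈ S := Finset.mem_insert_self _ _
  have hsep : ∀ x ∈ V', (∀ v ∈ S, x v = 0) → x = 0 :=
    fun x hx h => hS0 x hx (fun v hv => h v (Finset.mem_insert_of_mem hv))
  refine ⟨P, S, hPclosed, hPempty, hSempty, ?_⟩
  -- compute the rank of the sub-block
  set L : (List A → ℝ) →ₗ[ℝ] (↥S → ℝ) :=
    LinearMap.funLeft ℝ ℝ (fun v : ↥S => (v : List A)) with hL
  set M : Matrix ↥P ↥S ℝ := Matrix.of fun (u : ↥P) (v : ↥S) => f (↑u ++ ↑v) with hM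
  have hrange : Set.range M = L '' (rowf '' ↑P) := by
    ext g
    constructor
    · rintro ⟨u, rfl⟩
      exact ⟨rowf ↑u, ⟨↑u, u.2, rfl⟩, rfl⟩
    · rintro ⟨x, ⟨u, hu, rfl⟩, rfl⟩
      exact ⟨⟨u, hu⟩, rfl⟩
  rw [Matrix.rank_eq_finrank_span_row]
  change Module.finrank ℝ ↥(Submodule.span ℝ (Set.range M)) = r
  rw [hrange, Submodule.span_image, ← hV']
  -- restriction of L to V' is injective
  have hinj : Function.Injective (L.domRestrict V') := by
    rw [← LinearMap.ker_eq_bot, eq_bot_iff]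
    intro x hx
    simp only [LinearMap.mem_ker, LinearMap.domRestrict_apply] at hx
    have : (x : List A → ℝ) = 0 := by
      refine hsep x x.2 (fun v hv => ?_)
      exact congrFun hx ⟨v, hv⟩
    exact Submodule.mem_bot ℝ |>.mpr (Subtype.ext this)
  have : Submodule.map L V' = LinearMap.range (L.domRestrict V') :=
    (LinearMap.range_domRestrict V' L).symm
  rw [this, LinearMap.finrank_range_of_inj hinj, hV'fr]
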